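/- Let A ∈ [0,1]^{n×m}, b ∈ [0,1]^n, Δ the Chebyshev distance of b, and η = Aᵗ ⊡_→ F(b̄(Δ)). Then A ⊡ η = F(b̄(Δ)), η is an approximate solution (i.e., ‖A ⊡ η - b‖_∞ = Δ), and every x ∈ [0,1]^m with ‖A ⊡ x - b‖_∞ = Δ satisfies x ≤ η componentwise. -/
import Mathlib

noncomputable def godel (x y : ℝ) : ℝ := if x ≤ y then 1 else y

noncomputable def maxMin {n m : ℕ} [NeZero m] (A : Fin n → Fin m → ℝ) (x : Fin m → ℝ) :
    Fin n → ℝ :=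
  fun i => Finset.univ.sup' Finset.univ_nonempty (fun j => min (A i j) (x j))

noncomputable def godelComp {n m : ℕ} [NeZero n] (A : Fin n → Fin m → ℝ) (c : Fin n → ℝ) :
    Fin m → ℝ :=
  fun j => Finset.univ.inf' Finset.univ_nonempty (fun i => godel (A i j) (c i))

noncomputable def Fmap {n m : ℕ} [NeZero n] [NeZero m] (A : Fin n → Fin m → ℝ)
    (c : Fin n → ℝ) : Fin n → ℝ :=
  maxMin A (godelComp A c)

noncomputable def chebNorm {n : ℕ} [NeZero n] (b c : Fin n → ℝ) : ℝ :=
  Finset.univ.sup' Finset.univ_nonempty (fun i => |b i - c i|)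

set_option linter.unusedSectionVars false

-- basic godel lemmas
lemma godel_le_one {a c : ℝ} (hc : c ≤ 1) : godel a c ≤ 1 := by
  unfold godel; split
  · exact le_rfl
  · exact hc

lemma godel_nonneg {a c : ℝ} (hc : 0 ≤ c) : 0 ≤ godel a c := by
  unfold godel; split
  · norm_num
  · exact hc

lemma min_godel_le (a c : ℝ) : min a (godel a c) ≤ c := by
  unfold godel; split
  · exact le_trans (min_le_left _ _) ‹a ≤ c›
  · exact min_le_right _ _

lemma le_godel_of_min_le {a x c : ℝ} (hx : x ≤ 1) (h : min a x ≤ c) : x ≤ godel a c := by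
  unfold godel; split
  · exact hx
  · by_contra hxc
    push_neg at hxc
    have : c < min a x := lt_min (not_le.1 ‹¬ a ≤ c›) hxc
    linarith

lemma godel_mono {a c c' : ℝ} (ha : a ≤ 1) (h : c ≤ c') : godel a c ≤ godel a c' := by
  unfold godel; split <;> split
  · exact le_rfl
  · exact absurd (le_trans ‹a ≤ c› h) ‹¬ a ≤ c'›
  · have : c < a := not_le.1 ‹¬ a ≤ c›; linarith
  · exact h

section vec
variable {n m : ℕ} [NeZero n] [NeZero m] {A : Fin n → Fin m → ℝ} {c c' : Fin n → ℝ}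

lemma maxMin_mono {x y : Fin m → ℝ} (h : ∀ j, x j ≤ y j) (i : Fin n) :
    maxMin A x i ≤ maxMin A y i := by
  unfold maxMin
  apply Finset.sup'_le
  intro j _
  exact le_trans (min_le_min le_rfl (h j))
    (Finset.le_sup' (fun j => min (A i j) (y j)) (Finset.mem_univ j))

lemma godelComp_mono (hA : ∀ i j, A i j ∈ Set.Icc (0:ℝ) 1)
    (h : ∀ i, c i ≤ c' i) (j : Fin m) : godelComp A c j ≤ godelComp A c' j := by
  unfold godelComp
  apply Finset.le_inf'
  intro i _
  exact le_trans (Finset.inf'_le (fun i => godel (A i j) (c i)) (Finset.mem_univ i))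
    (godel_mono (hA i j).2 (h i))

lemma Fmap_le (c : Fin n → ℝ) (i : Fin n) : Fmap A c i ≤ c i := by
  unfold Fmap maxMin
  apply Finset.sup'_le
  intro j _
  calc min (A i j) (godelComp A c j) ≤ min (A i j) (godel (A i j) (c i)) :=
        min_le_min le_rfl (Finset.inf'_le (fun i => godel (A i j) (c i)) (Finset.mem_univ i))
    _ ≤ c i := min_godel_le _ _

lemma le_godelComp_of {x : Fin m → ℝ} (hx : ∀ j, x j ≤ 1)
    (h : ∀ i, maxMin A x i ≤ c i) (j : Fin m) : x j ≤ godelComp A c j := by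
  unfold godelComp
  apply Finset.le_inf'
  intro i _
  refine le_godel_of_min_le (hx j) (le_trans ?_ (h i))
  exact Finset.le_sup' (fun j => min (A i j) (x j)) (Finset.mem_univ j)

lemma maxMin_le_of_le_godelComp {x : Fin m → ℝ}
    (h : ∀ j, x j ≤ godelComp A c j) (i : Fin n) : maxMin A x i ≤ c i := by
  unfold maxMin
  apply Finset.sup'_le
  intro j _
  calc min (A i j) (x j) ≤ min (A i j) (godel (A i j) (c i)) :=
        min_le_min le_rfl (le_trans (h j)
          (Finset.inf'_le (fun i => godel (A i j) (c i)) (Finset.mem_univ i)))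
    _ ≤ c i := min_godel_le _ _

lemma godelComp_le_one (hc : ∀ i, c i ≤ 1) (j : Fin m) : godelComp A c j ≤ 1 := by
  unfold godelComp
  exact le_trans (Finset.inf'_le (fun i => godel (A i j) (c i)) (Finset.mem_univ (0 : Fin n)))
    (godel_le_one (hc 0))

lemma godelComp_nonneg (hc : ∀ i, (0:ℝ) ≤ c i) (j : Fin m) : 0 ≤ godelComp A c j := by
  unfold godelComp
  apply Finset.le_inf'
  intro i _
  exact godel_nonneg (hc i)

-- idempotence
lemma Fmap_idem (hA : ∀ i j, A i j ∈ Set.Icc (0:ℝ) 1) (hc : ∀ i, c i ≤ 1) :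
    maxMin A (godelComp A (Fmap A c)) = Fmap A c := by
  funext i
  apply le_antisymm
  · exact maxMin_le_of_le_godelComp (fun j => le_rfl) i
  · have h1 : ∀ j, godelComp A c j ≤ godelComp A (Fmap A c) j :=
      le_godelComp_of (godelComp_le_one hc) (fun i => le_rfl)
    exact maxMin_mono h1 i

-- chebNorm lemmas
lemma chebNorm_le_iff {b c : Fin n → ℝ} {d : ℝ} :
    chebNorm b c ≤ d ↔ ∀ i, |b i - c i| ≤ d := by
  unfold chebNorm
  rw [Finset.sup'_le_iff]
  simp

lemma le_chebNorm {b c : Fin n → ℝ} (i : Fin n) : |b i - c i| ≤ chebNorm b c :=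
  Finset.le_sup' (fun i => |b i - c i|) (Finset.mem_univ i)

lemma chebNorm_nonneg {b c : Fin n → ℝ} : 0 ≤ chebNorm b c :=
  le_trans (abs_nonneg _) (le_chebNorm 0)

end vec

section main
variable {n m : ℕ} [NeZero n] [NeZero m] {A : Fin n → Fin m → ℝ} {b : Fin n → ℝ}

-- perturbation lemma
lemma Fmap_perturb (hA : ∀ i j, A i j ∈ Set.Icc (0:ℝ) 1) {δ δ' : ℝ} (hdd : δ ≤ δ')
    (hcond : ∀ i j, ¬ (A i j ≤ min (b i + δ) 1) → b i + δ' < A i j) (i : Fin n) :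
    Fmap A (fun k => min (b k + δ') 1) i ≤ Fmap A (fun k => min (b k + δ) 1) i + (δ' - δ) := by
  set e := δ' - δ with he
  have he0 : 0 ≤ e := by linarith
  -- godel level
  have hg : ∀ i j, godel (A i j) (min (b i + δ') 1) ≤ godel (A i j) (min (b i + δ) 1) + e := by
    intro i j
    by_cases h : A i j ≤ min (b i + δ) 1
    · have h' : A i j ≤ min (b i + δ') 1 :=
        le_trans h (min_le_min (by linarith) le_rfl)
      simp [godel, h, h']
      linarith
    · have h2 : b i + δ' < A i j := hcond i j h
      have h' : ¬ A i j ≤ min (b i + δ') 1 := by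
        push_neg
        exact lt_of_le_of_lt (min_le_left _ _) h2
      simp only [godel, if_neg h, if_neg h']
      rcases le_total (b i + δ) 1 with hc | hc
      · rw [min_eq_left hc]
        exact le_trans (min_le_left _ _) (by linarith)
      · rw [min_eq_right hc]
        exact le_trans (min_le_right _ _) (by linarith)
  -- godelComp level
  have hG : ∀ j, godelComp A (fun k => min (b k + δ') 1) j ≤
      godelComp A (fun k => min (b k + δ) 1) j + e := by
    intro j
    obtain ⟨i₀, -, hi₀⟩ := Finset.exists_mem_eq_inf' (Finset.univ_nonempty (α := Fin n))
      (fun i => godel (A i j) (min (b i + δ) 1))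
    unfold godelComp
    rw [hi₀]
    exact le_trans (Finset.inf'_le (fun i => godel (A i j) (min (b i + δ') 1))
      (Finset.mem_univ i₀)) (hg i₀ j)
  -- Fmap level
  obtain ⟨j₀, -, hj₀⟩ := Finset.exists_mem_eq_sup' (Finset.univ_nonempty (α := Fin m))
    (fun j => min (A i j) (godelComp A (fun k => min (b k + δ') 1) j))
  show Finset.univ.sup' Finset.univ_nonempty
      (fun j => min (A i j) (godelComp A (fun k => min (b k + δ') 1) j)) ≤ _
  rw [hj₀]
  have h1 : min (A i j₀) (godelComp A (fun k => min (b k + δ') 1) j₀) ≤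
      min (A i j₀) (godelComp A (fun k => min (b k + δ) 1) j₀) + e := by
    have h2 := hG j₀
    rcases min_cases (A i j₀) (godelComp A (fun k => min (b k + δ) 1) j₀) with ⟨hm, hle⟩ | ⟨hm, hle⟩
    · rw [hm]
      exact le_trans (min_le_left _ _) (by linarith)
    · rw [hm]
      exact le_trans (min_le_right _ _) (by linarith)
  refine le_trans h1 ?_
  gcongr
  exact Finset.le_sup' (fun j => min (A i j) (godelComp A (fun k => min (b k + δ) 1) j))
    (Finset.mem_univ j₀)

end main

theorem stmt14 {n m : ℕ} [NeZero n] [NeZero m] (A : Fin n → Fin m → ℝ)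
    (hA : ∀ i j, A i j ∈ Set.Icc (0:ℝ) 1)
    (b : Fin n → ℝ) (hb : ∀ i, b i ∈ Set.Icc (0:ℝ) 1)
    (Δ : ℝ)
    (hΔ : Δ = sInf {d : ℝ | ∃ x : Fin m → ℝ, (∀ j, x j ∈ Set.Icc (0:ℝ) 1) ∧
        d = chebNorm b (maxMin A x)}) :
    maxMin A (godelComp A (Fmap A (fun k => min (b k + Δ) 1)))
        = Fmap A (fun k => min (b k + Δ) 1) ∧
      chebNorm b (maxMin A (godelComp A (Fmap A (fun k => min (b k + Δ) 1)))) = Δ ∧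
      ∀ x : Fin m → ℝ, (∀ j, x j ∈ Set.Icc (0:ℝ) 1) →
        chebNorm b (maxMin A x) = Δ →
        x ≤ godelComp A (Fmap A (fun k => min (b k + Δ) 1)) := by
  set S : Set ℝ := {d : ℝ | ∃ x : Fin m → ℝ, (∀ j, x j ∈ Set.Icc (0:ℝ) 1) ∧
      d = chebNorm b (maxMin A x)} with hS
  have hSne : S.Nonempty := by
    refine ⟨chebNorm b (maxMin A (fun _ => 0)), ⟨fun _ => 0, fun j => ?_, rfl⟩⟩
    exact ⟨le_rfl, zero_le_one⟩
  have hSbdd : BddBelow S := by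
    refine ⟨0, fun d hd => ?_⟩
    obtain ⟨x, -, rfl⟩ := hd
    exact chebNorm_nonneg
  have hΔ0 : 0 ≤ Δ := hΔ ▸ le_csInf hSne (fun d hd => by
    obtain ⟨x, -, rfl⟩ := hd; exact chebNorm_nonneg)
  -- any feasible x is dominated: maxMin A x ≤ bbar (chebNorm)
  have hdom : ∀ (x : Fin m → ℝ) (δ : ℝ), (∀ j, x j ∈ Set.Icc (0:ℝ) 1) →
      chebNorm b (maxMin A x) ≤ δ → ∀ i, maxMin A x i ≤ min (b i + δ) 1 := by
    intro x δ hx hc i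
    refine le_min ?_ ?_
    · have h1 : maxMin A x i - b i ≤ |b i - maxMin A x i| := by
        rw [abs_sub_comm]; exact le_abs_self _
      have h2 := le_trans (le_chebNorm (c := maxMin A x) i) hc
      linarith [le_trans h1 h2]
    · apply Finset.sup'_le
      intro j _
      exact le_trans (min_le_left _ _) (hA i j).2
  -- feasible x gives lower bound on Fmap (bbar δ) for δ ≥ chebNorm
  have hlow : ∀ (x : Fin m → ℝ) (δ : ℝ), (∀ j, x j ∈ Set.Icc (0:ℝ) 1) →
      chebNorm b (maxMin A x) ≤ δ → ∀ i,
      maxMin A x i ≤ Fmap A (fun k => min (b k + δ) 1) i := by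
    intro x δ hx hc i
    have h1 : ∀ j, x j ≤ godelComp A (fun k => min (b k + δ) 1) j :=
      le_godelComp_of (fun j => (hx j).2) (hdom x δ hx hc)
    exact maxMin_mono h1 i
  -- KEY: b i - Δ ≤ Fmap A (bbar Δ) i
  have key : ∀ i, b i - Δ ≤ Fmap A (fun k => min (b k + Δ) 1) i := by
    intro i
    have hstep : ∀ ε : ℝ, 0 < ε → b i - Δ ≤ Fmap A (fun k => min (b k + Δ) 1) i + ε := by
      intro ε hε
      -- choose small e > 0 avoiding thresholds
      set s : Finset (Fin n × Fin m) :=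
        Finset.univ.filter (fun p : Fin n × Fin m => Δ < A p.1 p.2 - b p.1) with hsdef
      have he : ∃ e : ℝ, 0 < e ∧ 2 * e ≤ ε ∧
          ∀ i j, Δ < A i j - b i → Δ + e < A i j - b i := by
        by_cases hs : s.Nonempty
        · set γ := s.inf' hs (fun p => A p.1 p.2 - b p.1 - Δ) with hγ
          have hγ0 : 0 < γ := by
            obtain ⟨p, hp, hpe⟩ := Finset.exists_mem_eq_inf' hs
              (fun p => A p.1 p.2 - b p.1 - Δ)
            rw [hγ, hpe]
            have := (Finset.mem_filter.1 hp).2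
            linarith
          refine ⟨min (ε/2) (γ/2), by positivity, by
            have := min_le_left (ε/2) (γ/2); linarith, ?_⟩
          intro i' j' hij
          have hmem : (i', j') ∈ s := Finset.mem_filter.2 ⟨Finset.mem_univ _, hij⟩
          have hγle : γ ≤ A i' j' - b i' - Δ :=
            Finset.inf'_le (fun p => A p.1 p.2 - b p.1 - Δ) hmem
          have := min_le_right (ε/2) (γ/2)
          linarith
        · refine ⟨ε/2, by positivity, by linarith, fun i' j' hij => ?_⟩
          exact absurd ⟨(i', j'), Finset.mem_filter.2 ⟨Finset.mem_univ _, hij⟩⟩ hs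
      obtain ⟨e, he0, heε, hthr⟩ := he
      -- perturbation bound with δ' = Δ + e
      have hcond : ∀ i' j, ¬ (A i' j ≤ min (b i' + Δ) 1) → b i' + (Δ + e) < A i' j := by
        intro i' j h
        push_neg at h
        have hA1 := (hA i' j).2
        have hmlt : min (b i' + Δ) 1 < A i' j := h
        have hbd : b i' + Δ < A i' j := by
          rcases le_total (b i' + Δ) 1 with hc | hc
          · rwa [min_eq_left hc] at hmlt
          · rw [min_eq_right hc] at hmlt; linarith
        have := hthr i' j (by linarith)
        linarith
      have hpert := Fmap_perturb (b := b) hA (by linarith : Δ ≤ Δ + e) hcond i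
      -- lower bound at Δ + e via some feasible x with chebNorm < Δ + e
      have hlt : sInf S < Δ + e := by rw [← hΔ]; linarith
      obtain ⟨d, hdS, hdlt⟩ := exists_lt_of_csInf_lt hSne hlt
      obtain ⟨x, hx, rfl⟩ := hdS
      have h1 := hlow x (Δ + e) hx (le_of_lt hdlt) i
      have h2 : b i - chebNorm b (maxMin A x) ≤ maxMin A x i := by
        have h3 : b i - maxMin A x i ≤ |b i - maxMin A x i| := le_abs_self _
        have h4 := le_chebNorm (c := maxMin A x) (b := b) i
        linarith
      have h5 : Fmap A (fun k => min (b k + (Δ + e)) 1) i ≤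
          Fmap A (fun k => min (b k + Δ) 1) i + (Δ + e - Δ) := hpert
      linarith
    exact le_of_forall_pos_le_add hstep
  -- Part 1: idempotence
  have part1 : maxMin A (godelComp A (Fmap A (fun k => min (b k + Δ) 1)))
      = Fmap A (fun k => min (b k + Δ) 1) :=
    Fmap_idem hA (fun i => min_le_right _ _)
  refine ⟨part1, ?_, ?_⟩
  · -- Part 2
    rw [part1]
    apply le_antisymm
    · rw [chebNorm_le_iff]
      intro i
      rw [abs_sub_le_iff]
      constructor
      · linarith [key i]
      · have h1 := Fmap_le (A := A) (fun k => min (b k + Δ) 1) i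
        have h2 : min (b i + Δ) 1 ≤ b i + Δ := min_le_left _ _
        linarith
    · have hmemS : chebNorm b (Fmap A (fun k => min (b k + Δ) 1)) ∈ S := by
        refine ⟨godelComp A (fun k => min (b k + Δ) 1), fun j => ?_, rfl⟩
        constructor
        · exact godelComp_nonneg (fun i => le_min (by linarith [(hb i).1]) zero_le_one) j
        · exact godelComp_le_one (fun i => min_le_right _ _) j
      have h := csInf_le hSbdd hmemS
      rwa [← hΔ] at h
  · -- Part 3
    intro x hx hxΔ
    intro j
    have h1 : ∀ i, maxMin A x i ≤ Fmap A (fun k => min (b k + Δ) 1) i :=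
      hlow x Δ hx (le_of_eq hxΔ)
    exact le_godelComp_of (fun j => (hx j).2) h1 j
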